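/- Every Priestley space embeds as a closed subspace of a power of the two-element chain: if X is a Priestley space and Z is the set of clopen upper sets of X, then the map f : X → (Z → Bool) given by f(x)(U) = (x ∈ U) is injective, continuous, order-preserving and order-reflecting (x ≤ y iff f(x) ≤ f(y) pointwise, where false < true), is a topological embedding, and has closed range; here Z → Bool carries the product topology (Bool discrete) and the pointwise order. -/

import Mathlib

open Classical in
/-- The evaluation map from a Priestley space `X` to `Z → Bool`, where `Z` is the set of
clopen upper sets of `X`: `f x U = (x ∈ U)`. -/
noncomputable def priestleyEval (X : Type*) [TopologicalSpace X] [PartialOrder X]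
    (x : X) (U : {U : Set X // IsClopen U ∧ IsUpperSet U}) : Bool :=
  decide (x ∈ U.1)

/-- Every Priestley space embeds as a closed subspace of a power of the two-element chain:
the evaluation map into `Z → Bool` (`Z` the clopen upper sets, `Bool` discrete with
`false < true`, product topology and pointwise order) is injective, continuous,
order-preserving and order-reflecting, a topological embedding, and has closed range. -/
theorem stmt_9 (X : Type*) [TopologicalSpace X] [PartialOrder X] [PriestleySpace X]
    [CompactSpace X] :
    Function.Injective (priestleyEval X) ∧
    Continuous (priestleyEval X) ∧
    (∀ x y : X, x ≤ y ↔ priestleyEval X x ≤ priestleyEval X y) ∧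
    Topology.IsEmbedding (priestleyEval X) ∧
    IsClosed (Set.range (priestleyEval X)) := by
  classical
  have hord : ∀ x y : X, x ≤ y ↔ priestleyEval X x ≤ priestleyEval X y := by
    intro x y
    constructor
    · intro hxy U
      simp only [priestleyEval]
      by_cases hx : x ∈ U.1
      · simp [hx, U.2.2 hxy hx]
      · simp [hx]
    · intro h
      by_contra hxy
      obtain ⟨U, hU, hUs, hx, hy⟩ := PriestleySpace.priestley hxy
      have := h ⟨U, hU, hUs⟩
      simp only [priestleyEval] at this
      rw [decide_eq_true hx, decide_eq_false hy] at this
      exact absurd this (by simp)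
  have hinj : Function.Injective (priestleyEval X) := by
    intro x y h
    exact le_antisymm ((hord x y).2 h.le) ((hord y x).2 h.ge)
  have hcont : Continuous (priestleyEval X) := by
    apply continuous_pi
    intro U
    refine IsLocallyConstant.continuous ?_
    rw [IsLocallyConstant.iff_isOpen_fiber]
    intro b
    cases b
    · convert U.2.1.compl.isOpen using 1
      ext x
      simp [priestleyEval]
    · convert U.2.1.isOpen using 1
      ext x
      simp [priestleyEval]
  have hce := hcont.isClosedEmbedding hinj
  exact ⟨hinj, hcont, hord, hce.isEmbedding, hce.isClosed_range⟩
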